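/- For every c₁ > 1 there exists a constant c₂ > 1, depending only on c₁, such that for every choice of d, A, b, ν as in the context and every r > 0, c₂⁻¹ Φ(r) ≤ Φ(c₁ r) ≤ c₂ Φ(r). -/

import Mathlib

open MeasureTheory ProbabilityTheory Filter Set Topology Metric RealInnerProductSpace
open scoped ENNReal NNReal

noncomputable section

abbrev Euc (d : ℕ) : Type := EuclideanSpace ℝ (Fin d)

/-- First exit time from `B` of the process started at `x`, valued in `[0,∞]`
(`∞` if the process never leaves `B`). -/
def exitTime {Ω : Type} {d : ℕ} (Y : ℝ → Ω → Euc d) (x : Euc d) (B : Set (Euc d)) (ω : Ω) :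
    ℝ≥0∞ :=
  sInf (ENNReal.ofReal '' {t : ℝ | 0 ≤ t ∧ x + Y t ω ∉ B})

/-- `E_x[τ_B]`, the expected exit time from `B` for the process started at `x`. -/
def expExit {Ω : Type} [MeasurableSpace Ω] {d : ℕ} (P : Measure Ω) (Y : ℝ → Ω → Euc d)
    (x : Euc d) (B : Set (Euc d)) : ℝ≥0∞ :=
  ∫⁻ ω, exitTime Y x B ω ∂P

/-- `h(X_{τ_B})` on the event `{τ_B < ∞}` (and `0` elsewhere), as an `ℝ≥0∞`-valued quantity. -/
def stopVal {Ω : Type} {d : ℕ} (Y : ℝ → Ω → Euc d) (h : Euc d → ℝ) (x : Euc d)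
    (B : Set (Euc d)) (ω : Ω) : ℝ≥0∞ :=
  if exitTime Y x B ω < ⊤ then ENNReal.ofReal (h (x + Y (exitTime Y x B ω).toReal ω)) else 0

/-- `E_x[h(X_{τ_B})]` for a nonnegative `h`. -/
def expStop {Ω : Type} [MeasurableSpace Ω] {d : ℕ} (P : Measure Ω) (Y : ℝ → Ω → Euc d)
    (h : Euc d → ℝ) (x : Euc d) (B : Set (Euc d)) : ℝ≥0∞ :=
  ∫⁻ ω, stopVal Y h x B ω ∂P

/-- `h` is harmonic in the open set `U` with respect to the process `x + Y`. -/
def HarmonicOn {Ω : Type} [MeasurableSpace Ω] {d : ℕ} (P : Measure Ω) (Y : ℝ → Ω → Euc d)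
    (h : Euc d → ℝ) (U : Set (Euc d)) : Prop :=
  ∀ B : Set (Euc d), IsOpen B → IsCompact (closure B) → closure B ⊆ U → ∀ x ∈ B,
    expStop P Y h x B ≠ ⊤ ∧ ENNReal.ofReal (h x) = expStop P Y h x B

/-- `h` vanishes continuously on `E`: it is zero on `E` and continuous at every point of `E`. -/
def VanishesContinuouslyOn {d : ℕ} (h : Euc d → ℝ) (E : Set (Euc d)) : Prop :=
  (∀ z ∈ E, h z = 0) ∧ ∀ z ∈ E, ContinuousAt h z

/-- A Lévy-like process: starts at `0`, a.s. càdlàg paths,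
stationary and independent increments. -/
structure IsLevyLike {Ω : Type} [MeasurableSpace Ω] {d : ℕ} (P : Measure Ω)
    (Y : ℝ → Ω → Euc d) : Prop where
  isProb : IsProbabilityMeasure P
  meas : ∀ t : ℝ, Measurable (Y t)
  start : ∀ᵐ ω ∂P, Y 0 ω = 0
  rightCont : ∀ᵐ ω ∂P, ∀ t : ℝ, 0 ≤ t → ContinuousWithinAt (fun s => Y s ω) (Ici t) t
  leftLim : ∀ᵐ ω ∂P, ∀ t : ℝ, 0 < t → ∃ L, Tendsto (fun s => Y s ω) (𝓝[<] t) (𝓝 L)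
  statInc : ∀ s t : ℝ, 0 ≤ s → s ≤ t →
    P.map (fun ω => Y t ω - Y s ω) = P.map (fun ω => Y (t - s) ω)
  indInc : ∀ n : ℕ, ∀ τ : Fin (n + 1) → ℝ, Monotone τ → 0 ≤ τ 0 →
    iIndepFun
      (fun i : Fin n => fun ω => Y (τ i.succ) ω - Y (τ i.castSucc) ω) P

/-- The process `Y` has characteristic exponent `ψ`:
`E[exp(i⟪u, Y_t⟫)] = exp(t ψ(u))`. -/
def HasCharExponent {Ω : Type} [MeasurableSpace Ω] {d : ℕ} (P : Measure Ω)
    (Y : ℝ → Ω → Euc d) (ψ : Euc d → ℂ) : Prop :=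
  ∀ u : Euc d, ∀ t : ℝ, 0 ≤ t →
    ∫ ω, Complex.exp (Complex.I * (⟪u, Y t ω⟫ : ℂ)) ∂P = Complex.exp ((t : ℂ) * ψ u)

/-- Laplace exponent `φ(s) = s + ∫₀^∞ (1 - e^{-st}) μ(dt)` (unit drift). -/
def laplaceExp (μm : Measure ℝ) (s : ℝ) : ℝ :=
  s + ∫ t, (1 - Real.exp (-(s * t))) ∂μm

/-- `μm` is a nonzero Lévy measure of a subordinator: carried by `(0,∞)` and
`∫ (1 ∧ t) μ(dt) < ∞`. -/
def IsLevyMeasure1D (μm : Measure ℝ) : Prop :=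
  μm ≠ 0 ∧ μm (Iic 0) = 0 ∧ (∫⁻ t, ENNReal.ofReal (min 1 t) ∂μm) < ⊤

/-- `μm` has a density `ρ` w.r.t. Lebesgue measure with `ρ(t) ≤ c ρ(2t)` on `(0,8)` and
`ρ(t) ≤ c ρ(t+1)` on `(1,∞)`. -/
def HasGoodDensity (μm : Measure ℝ) : Prop :=
  ∃ ρ : ℝ → ℝ, Measurable ρ ∧ (∀ t, 0 ≤ ρ t) ∧
    μm = volume.withDensity (fun t => ENNReal.ofReal (ρ t)) ∧
    ∃ c : ℝ, 0 < c ∧ (∀ t ∈ Ioo (0 : ℝ) 8, ρ t ≤ c * ρ (2 * t)) ∧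
      ∀ t ∈ Ioi (1 : ℝ), ρ t ≤ c * ρ (t + 1)

/-- Subordinate Brownian motion with Gaussian component and Laplace exponent `φ`:
a Lévy-like process with `E[exp(i⟪u, Y_t⟫)] = exp(-t φ(|u|²))`. -/
def IsSubordinateBM {Ω : Type} [MeasurableSpace Ω] {d : ℕ} (P : Measure Ω)
    (Y : ℝ → Ω → Euc d) (φ : ℝ → ℝ) : Prop :=
  IsLevyLike P Y ∧ HasCharExponent P Y fun u => ((-(φ (‖u‖ ^ 2)) : ℝ) : ℂ)

/-- Identification of `ℝ^{d-1} × ℝ` with `ℝ^d` (the last coordinate being the real factor). -/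
def embedPair (d : ℕ) (p : EuclideanSpace ℝ (Fin (d - 1)) × ℝ) : Euc d :=
  (EuclideanSpace.equiv (Fin d) ℝ).symm fun i => if h : (i : ℕ) < d - 1 then p.1 ⟨i, h⟩ else p.2

/-- `D` is a Lipschitz domain with characteristics `(R₀, Λ₀)`. -/
def IsLipschitzDomain (d : ℕ) (D : Set (Euc d)) (R₀ Λ₀ : ℝ) : Prop :=
  IsOpen D ∧ IsConnected D ∧
    ∀ z ∈ frontier D, ∃ O : Euc d ≃ₗᵢ[ℝ] Euc d, ∃ ψ : EuclideanSpace ℝ (Fin (d - 1)) → ℝ,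
      LipschitzWith Λ₀.toNNReal ψ ∧ ψ 0 = 0 ∧
      ball z R₀ ∩ D =
        (fun p : EuclideanSpace ℝ (Fin (d - 1)) × ℝ => z + O (embedPair d p)) ''
          {p | ‖embedPair d p‖ < R₀ ∧ ψ p.1 < p.2}

/-- The last coordinate of a vector in `ℝ^d` (junk value `0` if `d = 0`). -/
def lastCoord {d : ℕ} (x : Euc d) : ℝ :=
  if h : 0 < d then x ⟨d - 1, Nat.sub_lt h Nat.one_pos⟩ else 0

/-- The truncated circular cone `Γ_θ(r)` with vertex `0`, angle `θ` and axis along the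
positive last-coordinate direction. -/
def cone (d : ℕ) (θ r : ℝ) : Set (Euc d) :=
  {x | ‖x‖ < r ∧ ‖x‖ * Real.cos θ < lastCoord x}

/-- `D` satisfies the interior cone condition with common angle `θ`. -/
def InteriorConeCondition (d : ℕ) (D : Set (Euc d)) (θ : ℝ) : Prop :=
  ∃ a₀ : ℝ, 0 < a₀ ∧ ∀ z ∈ frontier D, ∃ R : Euc d ≃ₗᵢ[ℝ] Euc d,
    LinearEquiv.det R.toLinearEquiv = 1 ∧ (fun y => z + R y) '' cone d θ a₀ ⊆ D


/-- `D` is a `C¹` domain (with a uniform modulus of continuity for the gradients of the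
local boundary functions). -/
def IsC1Domain (d : ℕ) (D : Set (Euc d)) : Prop :=
  IsOpen D ∧ IsConnected D ∧
    ∃ R₀ : ℝ, 0 < R₀ ∧ ∃ f : ℝ → ℝ, (∀ s, 0 ≤ f s) ∧ f 0 = 0 ∧
      Tendsto f (𝓝[>] 0) (𝓝 0) ∧
      ∀ z ∈ frontier D, ∃ O : Euc d ≃ₗᵢ[ℝ] Euc d, ∃ ψ : EuclideanSpace ℝ (Fin (d - 1)) → ℝ,
        ContDiff ℝ 1 ψ ∧ ψ 0 = 0 ∧ fderiv ℝ ψ 0 = 0 ∧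
        (∀ a b : EuclideanSpace ℝ (Fin (d - 1)), ‖fderiv ℝ ψ a - fderiv ℝ ψ b‖ ≤ f ‖a - b‖) ∧
        ball z R₀ ∩ D =
          (fun p : EuclideanSpace ℝ (Fin (d - 1)) × ℝ => z + O (embedPair d p)) ''
            {p | ‖embedPair d p‖ < R₀ ∧ ψ p.1 < p.2}

/-- The event that the process started at `x` leaves `B` in finite time and lands in `A`
at the exit time. -/
def exitEvent {Ω : Type} {d : ℕ} (Y : ℝ → Ω → Euc d) (x : Euc d) (B A : Set (Euc d)) :
    Set Ω :=
  {ω | exitTime Y x B ω < ⊤ ∧ x + Y (exitTime Y x B ω).toReal ω ∈ A}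

/-- The hitting time `inf { t > 0 : x + Y_t ∈ A }`, valued in `[0,∞]`. -/
def hitTime {Ω : Type} {d : ℕ} (Y : ℝ → Ω → Euc d) (x : Euc d) (A : Set (Euc d)) (ω : Ω) :
    ℝ≥0∞ :=
  sInf (ENNReal.ofReal '' {t : ℝ | 0 < t ∧ x + Y t ω ∈ A})

def quadForm (d : ℕ) (A : Matrix (Fin d) (Fin d) ℝ) (u : Euc d) : ℝ :=
  ∑ i, ∑ j, u i * A i j * u j

/-- `(A, b, ν)` is a Lévy triple: `A` symmetric nonnegative-definite, and
`ν` a measure on `ℝ^d ∖ {0}` with `∫ (|z|² ∧ 1) ν(dz) < ∞`. -/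
def IsLevyTriple (d : ℕ) (A : Matrix (Fin d) (Fin d) ℝ) (b : Euc d)
    (ν : Measure (Euc d)) : Prop :=
  A.IsSymm ∧ (∀ u : Euc d, 0 ≤ quadForm d A u) ∧ ν {0} = 0 ∧
    (∫⁻ z, ENNReal.ofReal (min (‖z‖ ^ 2) 1) ∂ν) < ⊤

/-- The Lévy–Khintchine exponent `ψ` of the triple `(A, b, ν)`. -/
def levyExponent (d : ℕ) (A : Matrix (Fin d) (Fin d) ℝ) (b : Euc d) (ν : Measure (Euc d))
    (u : Euc d) : ℂ :=
  -(1 / 2 : ℂ) * (quadForm d A u : ℂ) + Complex.I * (⟪b, u⟫ : ℂ) +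
    ∫ z, (Complex.exp (Complex.I * (⟪u, z⟫ : ℂ)) - 1 -
      (if ‖z‖ ≤ 1 then Complex.I * (⟪u, z⟫ : ℂ) else 0)) ∂ν

/-- The truncated drift `b̃_r`. -/
def btilde {d : ℕ} (b : Euc d) (ν : Measure (Euc d)) (r : ℝ) : Euc d :=
  if r ≤ 1 then b - ∫ z in {z : Euc d | r < ‖z‖ ∧ ‖z‖ ≤ 1}, z ∂ν
  else b + ∫ z in {z : Euc d | 1 < ‖z‖ ∧ ‖z‖ ≤ r}, z ∂ν

/-- Pruitt's function
`Φ(r) = r^{-2} ∑ a_{ii} + ∫ ((|z|²/r²) ∧ 1) ν(dz) + |b̃_r|/r`. -/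
def Phi (d : ℕ) (A : Matrix (Fin d) (Fin d) ℝ) (b : Euc d) (ν : Measure (Euc d))
    (r : ℝ) : ℝ :=
  (∑ i, A i i) / r ^ 2 + (∫ z, min (‖z‖ ^ 2 / r ^ 2) 1 ∂ν) + ‖btilde b ν r‖ / r

/-- The running maximum `M_t = sup_{0 ≤ s ≤ t} |Y_s|`. -/
def runMax {Ω : Type} {d : ℕ} (Y : ℝ → Ω → Euc d) (t : ℝ) (ω : Ω) : ℝ :=
  sSup {x : ℝ | ∃ s : ℝ, 0 ≤ s ∧ s ≤ t ∧ x = ‖Y s ω‖}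

/-- `Y` is a Lévy process with Lévy triple `(A, b, ν)`:
a Lévy-like process with characteristic exponent the Lévy–Khintchine exponent of `(A, b, ν)`. -/
def IsLevyProcess {Ω : Type} [MeasurableSpace Ω] {d : ℕ} (P : Measure Ω)
    (Y : ℝ → Ω → Euc d) (A : Matrix (Fin d) (Fin d) ℝ) (b : Euc d)
    (ν : Measure (Euc d)) : Prop :=
  IsLevyLike P Y ∧ HasCharExponent P Y (levyExponent d A b ν)

/-- First exit time from `B` of a process `W` (which carries its own starting point). -/
def exitTimeW {Ω : Type} {d : ℕ} (W : ℝ → Ω → Euc d) (B : Set (Euc d)) (ω : Ω) : ℝ≥0∞ :=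
  sInf (ENNReal.ofReal '' {t : ℝ | 0 ≤ t ∧ W t ω ∉ B})

/-- `W` is a Brownian motion on `ℝ^d` with generator `Δ` started at `x`:
`W_0 = x` a.s., continuous sample paths, stationary independent increments, and
`E[exp(i⟪u, W_t − W_0⟫)] = exp(−t|u|²)`. -/
def IsBM {Ω : Type} [MeasurableSpace Ω] {d : ℕ} (P : Measure Ω) (W : ℝ → Ω → Euc d)
    (x : Euc d) : Prop :=
  IsProbabilityMeasure P ∧ (∀ t : ℝ, Measurable (W t)) ∧ (∀ᵐ ω ∂P, W 0 ω = x) ∧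
    (∀ᵐ ω ∂P, ContinuousOn (fun t => W t ω) (Ici 0)) ∧
    (∀ s t : ℝ, 0 ≤ s → s ≤ t →
      P.map (fun ω => W t ω - W s ω) = P.map (fun ω => W (t - s) ω - W 0 ω)) ∧
    (∀ n : ℕ, ∀ τ : Fin (n + 1) → ℝ, Monotone τ → 0 ≤ τ 0 →
      iIndepFun
        (fun i : Fin n => fun ω => W (τ i.succ) ω - W (τ i.castSucc) ω) P) ∧
    ∀ u : Euc d, ∀ t : ℝ, 0 ≤ t →
      ∫ ω, Complex.exp (Complex.I * (⟪u, W t ω - W 0 ω⟫ : ℂ)) ∂P =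
        Complex.exp (((-(t * ‖u‖ ^ 2)) : ℝ) : ℂ)

/-- The rescaled function `f_{z₀,r}(y) = f((y − z₀)/r)`. -/
def rescale {d : ℕ} (f : Euc d → ℝ) (z₀ : Euc d) (r : ℝ) : Euc d → ℝ :=
  fun w => f (r⁻¹ • (w - z₀))

section AuxPhi


variable {d : ℕ}

lemma ann_meas (s t : ℝ) : MeasurableSet {z : Euc d | s < ‖z‖ ∧ ‖z‖ ≤ t} := by
  have : {z : Euc d | s < ‖z‖ ∧ ‖z‖ ≤ t} = {z | s < ‖z‖} ∩ {z | ‖z‖ ≤ t} := by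
    ext z; simp [mem_setOf_eq]
  rw [this]
  exact (measurableSet_lt measurable_const measurable_norm).inter
    (measurableSet_le measurable_norm measurable_const)

lemma min_meas (R : ℝ) : Measurable (fun z : Euc d => min (‖z‖ ^ 2 / R ^ 2) 1) :=
  ((measurable_norm.pow_const 2).div_const _).min measurable_const

lemma ann_fin (ν : Measure (Euc d))
    (hν : (∫⁻ z, ENNReal.ofReal (min (‖z‖ ^ 2) 1) ∂ν) < ⊤) {s : ℝ} (hs : 0 < s) (t : ℝ) :
    ν {z : Euc d | s < ‖z‖ ∧ ‖z‖ ≤ t} ≠ ⊤ := by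
  set Sset := {z : Euc d | s < ‖z‖ ∧ ‖z‖ ≤ t} with hS
  have key : ENNReal.ofReal (min (s ^ 2) 1) * ν Sset
      ≤ ∫⁻ z, ENNReal.ofReal (min (‖z‖ ^ 2) 1) ∂ν := by
    rw [← setLIntegral_const]
    calc ∫⁻ _ in Sset, ENNReal.ofReal (min (s ^ 2) 1) ∂ν
        ≤ ∫⁻ z in Sset, ENNReal.ofReal (min (‖z‖ ^ 2) 1) ∂ν := by
          refine setLIntegral_mono (((measurable_norm.pow_const 2).min measurable_const).ennreal_ofReal) ?_
          intro z hz
          exact ENNReal.ofReal_le_ofReal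
            (min_le_min (by nlinarith [hz.1, hs, norm_nonneg z]) le_rfl)
      _ ≤ ∫⁻ z, ENNReal.ofReal (min (‖z‖ ^ 2) 1) ∂ν := setLIntegral_le_lintegral _ _
  have hne : ENNReal.ofReal (min (s ^ 2) 1) ≠ 0 := by
    simp only [ne_eq, ENNReal.ofReal_eq_zero, not_le]
    exact lt_min (by positivity) one_pos
  exact (ENNReal.lt_top_of_mul_ne_top_right (ne_top_of_le_ne_top hν.ne key) hne).ne

lemma integrableOn_ann (ν : Measure (Euc d))
    (hν : (∫⁻ z, ENNReal.ofReal (min (‖z‖ ^ 2) 1) ∂ν) < ⊤) {s : ℝ} (hs : 0 < s) (t : ℝ) :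
    IntegrableOn (fun z : Euc d => z) {z : Euc d | s < ‖z‖ ∧ ‖z‖ ≤ t} ν := by
  refine Measure.integrableOn_of_bounded (M := t) (ann_fin ν hν hs t) aestronglyMeasurable_id ?_
  exact (ae_restrict_iff' (ann_meas s t)).mpr (ae_of_all _ fun z hz => hz.2)

lemma integrable_min (ν : Measure (Euc d))
    (hν : (∫⁻ z, ENNReal.ofReal (min (‖z‖ ^ 2) 1) ∂ν) < ⊤) {R : ℝ} (hR : 0 < R) :
    Integrable (fun z : Euc d => min (‖z‖ ^ 2 / R ^ 2) 1) ν := by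
  refine ⟨(min_meas R).aestronglyMeasurable, ?_⟩
  rw [hasFiniteIntegral_iff_ofReal (ae_of_all _ fun z => le_min (by positivity) zero_le_one)]
  set C := max (1 / R ^ 2) 1 with hC
  have hC0 : 0 ≤ C := le_trans zero_le_one (le_max_right _ _)
  have hpt : ∀ z : Euc d, min (‖z‖ ^ 2 / R ^ 2) 1 ≤ C * min (‖z‖ ^ 2) 1 := by
    intro z
    rcases le_or_gt (‖z‖ ^ 2) 1 with h | h
    · rw [min_eq_left h]
      calc min (‖z‖ ^ 2 / R ^ 2) 1 ≤ ‖z‖ ^ 2 / R ^ 2 := min_le_left _ _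
        _ = (1 / R ^ 2) * ‖z‖ ^ 2 := by ring
        _ ≤ C * ‖z‖ ^ 2 := by gcongr; exact le_max_left _ _
    · rw [min_eq_right h.le]
      calc min (‖z‖ ^ 2 / R ^ 2) 1 ≤ 1 := min_le_right _ _
        _ ≤ C := le_max_right _ _
        _ = C * 1 := (mul_one C).symm
  calc ∫⁻ z, ENNReal.ofReal (min (‖z‖ ^ 2 / R ^ 2) 1) ∂ν
      ≤ ∫⁻ z, ENNReal.ofReal (C * min (‖z‖ ^ 2) 1) ∂ν :=
        lintegral_mono fun z => ENNReal.ofReal_le_ofReal (hpt z)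
    _ = ENNReal.ofReal C * ∫⁻ z, ENNReal.ofReal (min (‖z‖ ^ 2) 1) ∂ν := by
        simp_rw [ENNReal.ofReal_mul hC0]
        exact lintegral_const_mul _ ((measurable_norm.pow_const 2).min measurable_const).ennreal_ofReal
    _ < ⊤ := ENNReal.mul_lt_top ENNReal.ofReal_lt_top hν

lemma nu_ann_le (ν : Measure (Euc d))
    (hν : (∫⁻ z, ENNReal.ofReal (min (‖z‖ ^ 2) 1) ∂ν) < ⊤) {s t R : ℝ}
    (hs : 0 < s) (hsR : s ≤ R) :
    (ν {z : Euc d | s < ‖z‖ ∧ ‖z‖ ≤ t}).toReal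
      ≤ (R / s) ^ 2 * ∫ z, min (‖z‖ ^ 2 / R ^ 2) 1 ∂ν := by
  have hR : 0 < R := hs.trans_le hsR
  set Sset := {z : Euc d | s < ‖z‖ ∧ ‖z‖ ≤ t} with hSdef
  have hmeas := ann_meas (d := d) s t
  have hfin : ν Sset ≠ ⊤ := ann_fin ν hν hs t
  have hint : Integrable (Sset.indicator fun _ => (1 : ℝ)) ν :=
    (integrableOn_const (C := (1 : ℝ)) hfin).integrable_indicator hmeas
  have hint2 : Integrable (fun z : Euc d => (R / s) ^ 2 * min (‖z‖ ^ 2 / R ^ 2) 1) ν :=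
    (integrable_min ν hν hR).const_mul _
  have hpt : ∀ z : Euc d,
      Sset.indicator (fun _ => (1 : ℝ)) z ≤ (R / s) ^ 2 * min (‖z‖ ^ 2 / R ^ 2) 1 := by
    intro z
    by_cases hz : z ∈ Sset
    · rw [Set.indicator_of_mem hz]
      have h1 : s ^ 2 / R ^ 2 ≤ ‖z‖ ^ 2 / R ^ 2 := by gcongr; exact hz.1.le
      have h2 : s ^ 2 / R ^ 2 ≤ 1 := by
        rw [div_le_one (by positivity)]; gcongr
      have hmin : s ^ 2 / R ^ 2 ≤ min (‖z‖ ^ 2 / R ^ 2) 1 := le_min h1 h2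
      calc (1 : ℝ) = (R / s) ^ 2 * (s ^ 2 / R ^ 2) := by field_simp
        _ ≤ (R / s) ^ 2 * min (‖z‖ ^ 2 / R ^ 2) 1 := mul_le_mul_of_nonneg_left hmin (by positivity)
    · rw [Set.indicator_of_notMem hz]; positivity
  calc (ν Sset).toReal = ∫ z, Sset.indicator (fun _ => (1 : ℝ)) z ∂ν := by
        rw [integral_indicator_const (1 : ℝ) hmeas, smul_eq_mul, mul_one]; rfl
    _ ≤ ∫ z, (R / s) ^ 2 * min (‖z‖ ^ 2 / R ^ 2) 1 ∂ν := integral_mono hint hint2 hpt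
    _ = (R / s) ^ 2 * ∫ z, min (‖z‖ ^ 2 / R ^ 2) 1 ∂ν := integral_const_mul _ _


lemma btilde_diff {d : ℕ} (b : Euc d) (ν : Measure (Euc d))
    (hν : (∫⁻ z, ENNReal.ofReal (min (‖z‖ ^ 2) 1) ∂ν) < ⊤) {r s : ℝ}
    (hr : 0 < r) (hrs : r ≤ s) :
    btilde b ν s = btilde b ν r + ∫ z in {z : Euc d | r < ‖z‖ ∧ ‖z‖ ≤ s}, z ∂ν := by
  have hs : 0 < s := hr.trans_le hrs
  unfold btilde
  rcases le_or_gt s 1 with h1 | h1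
  · rw [if_pos h1, if_pos (hrs.trans h1)]
    have hsplit : {z : Euc d | r < ‖z‖ ∧ ‖z‖ ≤ 1}
        = {z : Euc d | r < ‖z‖ ∧ ‖z‖ ≤ s} ∪ {z : Euc d | s < ‖z‖ ∧ ‖z‖ ≤ 1} := by
      ext z
      simp only [mem_setOf_eq, mem_union]
      constructor
      · rintro ⟨h, h'⟩
        rcases le_or_gt ‖z‖ s with hz | hz
        · exact Or.inl ⟨h, hz⟩
        · exact Or.inr ⟨hz, h'⟩
      · rintro (⟨h, h'⟩ | ⟨h, h'⟩)
        · exact ⟨h, h'.trans h1⟩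
        · exact ⟨hrs.trans_lt h, h'⟩
    have hdisj : Disjoint {z : Euc d | r < ‖z‖ ∧ ‖z‖ ≤ s} {z : Euc d | s < ‖z‖ ∧ ‖z‖ ≤ 1} := by
      rw [Set.disjoint_left]
      rintro z ⟨_, h1'⟩ ⟨h2', _⟩
      exact absurd h1' (not_le.mpr h2')
    rw [hsplit, setIntegral_union hdisj (ann_meas s 1) (integrableOn_ann ν hν hr s)
      (integrableOn_ann ν hν hs 1)]
    abel
  · rw [if_neg (not_le.mpr h1)]
    rcases le_or_gt r 1 with h2 | h2
    · rw [if_pos h2]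
      have hsplit : {z : Euc d | r < ‖z‖ ∧ ‖z‖ ≤ s}
          = {z : Euc d | r < ‖z‖ ∧ ‖z‖ ≤ 1} ∪ {z : Euc d | 1 < ‖z‖ ∧ ‖z‖ ≤ s} := by
        ext z
        simp only [mem_setOf_eq, mem_union]
        constructor
        · rintro ⟨h, h'⟩
          rcases le_or_gt ‖z‖ 1 with hz | hz
          · exact Or.inl ⟨h, hz⟩
          · exact Or.inr ⟨hz, h'⟩
        · rintro (⟨h, h'⟩ | ⟨h, h'⟩)
          · exact ⟨h, h'.trans h1.le⟩
          · exact ⟨lt_of_le_of_lt h2 h, h'⟩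
      have hdisj : Disjoint {z : Euc d | r < ‖z‖ ∧ ‖z‖ ≤ 1} {z : Euc d | 1 < ‖z‖ ∧ ‖z‖ ≤ s} := by
        rw [Set.disjoint_left]
        rintro z ⟨_, h1'⟩ ⟨h2', _⟩
        exact absurd h1' (not_le.mpr h2')
      rw [hsplit, setIntegral_union hdisj (ann_meas 1 s) (integrableOn_ann ν hν hr 1)
        (integrableOn_ann ν hν one_pos s)]
      abel
    · rw [if_neg (not_le.mpr h2)]
      have hsplit : {z : Euc d | 1 < ‖z‖ ∧ ‖z‖ ≤ s}
          = {z : Euc d | 1 < ‖z‖ ∧ ‖z‖ ≤ r} ∪ {z : Euc d | r < ‖z‖ ∧ ‖z‖ ≤ s} := by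
        ext z
        simp only [mem_setOf_eq, mem_union]
        constructor
        · rintro ⟨h, h'⟩
          rcases le_or_gt ‖z‖ r with hz | hz
          · exact Or.inl ⟨h, hz⟩
          · exact Or.inr ⟨hz, h'⟩
        · rintro (⟨h, h'⟩ | ⟨h, h'⟩)
          · exact ⟨h, h'.trans hrs⟩
          · exact ⟨h2.trans h, h'⟩
      have hdisj : Disjoint {z : Euc d | 1 < ‖z‖ ∧ ‖z‖ ≤ r} {z : Euc d | r < ‖z‖ ∧ ‖z‖ ≤ s} := by
        rw [Set.disjoint_left]
        rintro z ⟨_, h1'⟩ ⟨h2', _⟩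
        exact absurd h1' (not_le.mpr h2')
      rw [hsplit, setIntegral_union hdisj (ann_meas r s) (integrableOn_ann ν hν one_pos r) (integrableOn_ann ν hν hr s)]
      abel

lemma trace_nonneg (d : ℕ) (A : Matrix (Fin d) (Fin d) ℝ)
    (hA : ∀ u : Euc d, 0 ≤ quadForm d A u) : 0 ≤ ∑ i, A i i := by
  refine Finset.sum_nonneg fun i _ => ?_
  have h := hA (EuclideanSpace.single i 1)
  simp only [quadForm, EuclideanSpace.single_apply, ite_mul, mul_ite, one_mul, mul_one,
    zero_mul, mul_zero, Finset.sum_ite_eq', Finset.mem_univ, if_true] at h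
  exact h

end AuxPhi

set_option maxHeartbeats 1000000 in
/-- Remark 2.5: for every `c₁ > 1` there is `c₂ > 1`, depending only on
`c₁`, with `c₂⁻¹ Φ(r) ≤ Φ(c₁ r) ≤ c₂ Φ(r)` for every Lévy triple and every `r > 0`. -/
theorem phi_scaling
    (c₁ : ℝ) (hc₁ : 1 < c₁) :
    ∃ c₂ : ℝ, 1 < c₂ ∧
      ∀ (d : ℕ), 1 ≤ d →
      ∀ (A : Matrix (Fin d) (Fin d) ℝ) (b : Euc d) (ν : Measure (Euc d)),
        IsLevyTriple d A b ν →
        ∀ r : ℝ, 0 < r →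
          c₂⁻¹ * Phi d A b ν r ≤ Phi d A b ν (c₁ * r) ∧
            Phi d A b ν (c₁ * r) ≤ c₂ * Phi d A b ν r := by
  refine ⟨c₁ ^ 3 + c₁ ^ 2 + c₁ + 2, by nlinarith, ?_⟩
  set c₂ := c₁ ^ 3 + c₁ ^ 2 + c₁ + 2 with hc₂def
  have hc₂ : 1 < c₂ := by nlinarith
  intro d hd A b ν hT r hr
  obtain ⟨-, hA, -, hνfin⟩ := hT
  simp only [Phi]
  have hc₁0 : 0 < c₁ := lt_trans one_pos hc₁
  have hcr : 0 < c₁ * r := mul_pos hc₁0 hr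
  have hrcr : r ≤ c₁ * r := le_mul_of_one_le_left hr.le hc₁.le
  set S := ∑ i, A i i with hSdef
  have hS : 0 ≤ S := trace_nonneg d A hA
  set I1 := ∫ z, min (‖z‖ ^ 2 / r ^ 2) 1 ∂ν with hI1def
  set I2 := ∫ z, min (‖z‖ ^ 2 / (c₁ * r) ^ 2) 1 ∂ν with hI2def
  set N := (ν {z : Euc d | r < ‖z‖ ∧ ‖z‖ ≤ c₁ * r}).toReal with hNdef
  set Δ := ∫ z in {z : Euc d | r < ‖z‖ ∧ ‖z‖ ≤ c₁ * r}, z ∂ν with hΔdef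
  set B1 := ‖btilde b ν r‖ with hB1def
  set B2 := ‖btilde b ν (c₁ * r)‖ with hB2def
  have int1 : Integrable (fun z : Euc d => min (‖z‖ ^ 2 / r ^ 2) 1) ν :=
    integrable_min ν hνfin hr
  have int2 : Integrable (fun z : Euc d => min (‖z‖ ^ 2 / (c₁ * r) ^ 2) 1) ν :=
    integrable_min ν hνfin hcr
  have hI1 : 0 ≤ I1 := integral_nonneg fun z => le_min (by positivity) zero_le_one
  have hI2 : 0 ≤ I2 := integral_nonneg fun z => le_min (by positivity) zero_le_one
  have hN : 0 ≤ N := ENNReal.toReal_nonneg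
  have hB1 : 0 ≤ B1 := norm_nonneg _
  have hB2 : 0 ≤ B2 := norm_nonneg _
  -- measure of annulus bounded by the integrals
  have hN1 : N ≤ I1 := by
    have := nu_ann_le ν hνfin (t := c₁ * r) hr (le_refl r)
    rwa [div_self hr.ne', one_pow, one_mul] at this
  have hN2 : N ≤ c₁ ^ 2 * I2 := by
    have := nu_ann_le ν hνfin (t := c₁ * r) hr hrcr
    rwa [mul_div_assoc, div_self hr.ne', mul_one] at this
  -- comparison of the integrals
  have hrr : r ^ 2 ≤ (c₁ * r) ^ 2 := by nlinarith
  have hI21 : I2 ≤ I1 := by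
    refine integral_mono int2 int1 fun z => min_le_min ?_ le_rfl
    gcongr
  have hI12 : I1 ≤ c₁ ^ 2 * I2 := by
    have h := integral_mono int1 (int2.const_mul (c₁ ^ 2)) (fun z => ?_)
    · rwa [integral_const_mul] at h
    · have he : c₁ ^ 2 * (‖z‖ ^ 2 / (c₁ * r) ^ 2) = ‖z‖ ^ 2 / r ^ 2 := by
        field_simp
      rcases le_or_gt (‖z‖ ^ 2 / r ^ 2) 1 with h' | h'
      · calc min (‖z‖ ^ 2 / r ^ 2) 1 ≤ ‖z‖ ^ 2 / r ^ 2 := min_le_left _ _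
          _ = c₁ ^ 2 * (‖z‖ ^ 2 / (c₁ * r) ^ 2) := he.symm
          _ ≤ c₁ ^ 2 * min (‖z‖ ^ 2 / (c₁ * r) ^ 2) 1 := by
              gcongr
              refine le_min le_rfl ?_
              rw [← he] at h'
              nlinarith
      · calc min (‖z‖ ^ 2 / r ^ 2) 1 ≤ 1 := min_le_right _ _
          _ ≤ c₁ ^ 2 * min (‖z‖ ^ 2 / (c₁ * r) ^ 2) 1 := by
              have : (1 : ℝ) ≤ ‖z‖ ^ 2 / (c₁ * r) ^ 2 ∨ min (‖z‖ ^ 2 / (c₁ * r) ^ 2) 1 = ‖z‖ ^ 2 / (c₁ * r) ^ 2 := by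
                rcases le_or_gt 1 (‖z‖ ^ 2 / (c₁ * r) ^ 2) with h'' | h''
                · exact Or.inl h''
                · exact Or.inr (min_eq_left h''.le)
              rcases this with h'' | h''
              · rw [min_eq_right h'']
                nlinarith
              · rw [h'', ← he] at *
                nlinarith [he, h']
  -- drift increment
  have hbd : btilde b ν (c₁ * r) = btilde b ν r + Δ :=
    btilde_diff b ν hνfin hr hrcr
  have hΔbound : ‖Δ‖ ≤ c₁ * r * N := by
    rw [hNdef]
    exact norm_setIntegral_le_of_norm_le_const (ann_fin ν hνfin hr (c₁ * r)).lt_top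
      (fun z hz => hz.2)
  have hB2B1 : B2 ≤ B1 + ‖Δ‖ := by rw [hB2def, hbd]; exact norm_add_le _ _
  have hB1B2 : B1 ≤ B2 + ‖Δ‖ := by
    have : btilde b ν r = btilde b ν (c₁ * r) - Δ := by rw [hbd]; abel
    rw [hB1def, this]
    exact norm_sub_le _ _
  have ht1 : S / (c₁ * r) ^ 2 ≤ S / r ^ 2 := by gcongr
  have ht1' : S / r ^ 2 = c₁ ^ 2 * (S / (c₁ * r) ^ 2) := by
    field_simp
  -- upper bound
  have key1 : S / (c₁ * r) ^ 2 + I2 + B2 / (c₁ * r) ≤ 2 * (S / r ^ 2 + I1 + B1 / r) := by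
    have h3 : B2 / (c₁ * r) ≤ B1 / r + I1 := by
      calc B2 / (c₁ * r) ≤ (B1 + ‖Δ‖) / (c₁ * r) := by gcongr
        _ = B1 / (c₁ * r) + ‖Δ‖ / (c₁ * r) := add_div _ _ _
        _ ≤ B1 / r + N := by
            gcongr
            · rw [div_le_iff₀ hcr]
              calc ‖Δ‖ ≤ c₁ * r * N := hΔbound
                _ = N * (c₁ * r) := by ring
        _ ≤ B1 / r + I1 := by linarith
    have hSr : 0 ≤ S / r ^ 2 := by positivity
    have hBr : 0 ≤ B1 / r := by positivity
    linarith
  -- lower bound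
  have key2 : S / r ^ 2 + I1 + B1 / r
      ≤ c₂ * (S / (c₁ * r) ^ 2 + I2 + B2 / (c₁ * r)) := by
    have h3 : B1 / r ≤ c₁ * (B2 / (c₁ * r)) + c₁ ^ 3 * I2 := by
      have e1 : c₁ * (B2 / (c₁ * r)) = B2 / r := by
        field_simp
      calc B1 / r ≤ (B2 + ‖Δ‖) / r := by gcongr
        _ = B2 / r + ‖Δ‖ / r := add_div _ _ _
        _ ≤ B2 / r + c₁ * N := by
            gcongr
            rw [div_le_iff₀ hr]
            calc ‖Δ‖ ≤ c₁ * r * N := hΔbound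
              _ = c₁ * N * r := by ring
        _ ≤ c₁ * (B2 / (c₁ * r)) + c₁ ^ 3 * I2 := by
            rw [e1]
            have : c₁ * N ≤ c₁ * (c₁ ^ 2 * I2) := by gcongr
            nlinarith
    have hq1 : 0 ≤ S / (c₁ * r) ^ 2 := by positivity
    have hq3 : 0 ≤ B2 / (c₁ * r) := by positivity
    have e2 : c₁ ^ 2 * (S / (c₁ * r) ^ 2) ≤ c₂ * (S / (c₁ * r) ^ 2) := by
      apply mul_le_mul_of_nonneg_right _ hq1
      nlinarith
    have e3 : (c₁ ^ 2 + c₁ ^ 3) * I2 ≤ c₂ * I2 := by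
      apply mul_le_mul_of_nonneg_right _ hI2
      nlinarith
    have e4 : c₁ * (B2 / (c₁ * r)) ≤ c₂ * (B2 / (c₁ * r)) := by
      apply mul_le_mul_of_nonneg_right _ hq3
      nlinarith
    have hstep : S / r ^ 2 + I1 + B1 / r
        ≤ c₂ * (S / (c₁ * r) ^ 2) + c₂ * I2 + c₂ * (B2 / (c₁ * r)) := by
      nlinarith [hI12, h3, ht1', e2, e3, e4]
    calc S / r ^ 2 + I1 + B1 / r
        ≤ c₂ * (S / (c₁ * r) ^ 2) + c₂ * I2 + c₂ * (B2 / (c₁ * r)) := hstep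
      _ = c₂ * (S / (c₁ * r) ^ 2 + I2 + B2 / (c₁ * r)) := by ring
  have hPhir : 0 ≤ S / r ^ 2 + I1 + B1 / r := by
    have h1 : 0 ≤ S / r ^ 2 := by positivity
    have h2 : 0 ≤ B1 / r := by positivity
    linarith
  constructor
  · rw [inv_mul_le_iff₀ (lt_trans one_pos hc₂)]
    exact key2
  · calc S / (c₁ * r) ^ 2 + I2 + B2 / (c₁ * r)
        ≤ 2 * (S / r ^ 2 + I1 + B1 / r) := key1
      _ ≤ c₂ * (S / r ^ 2 + I1 + B1 / r) := by
          apply mul_le_mul_of_nonneg_right _ hPhir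
          nlinarith


end
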